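/- Let A be a unital C*-algebra, let a ∈ A have closed range, and let p₀ = 1 − 𝐮(a)𝐮(a)* and q₀ = 1 − 𝐮(a)*𝐮(a) be the left and right defect projections of a. Then a is a continuity point of the map 𝐮 (defined on the set of closed-range elements of A with the norm topology, with values in A) if and only if 0 is the only element of p₀Aq₀ = {p₀ x q₀ : x ∈ A} that has closed range. -/

import Mathlib

open scoped NNReal

variable {A : Type*} [NonUnitalCStarAlgebra A]

/-- The absolute value `|a| = (a*a)^{1/2}` of an element of a C*-algebra. -/
noncomputable def cstarAbs (a : A) : A := cfcₙ Real.sqrt (star a * a)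

/-- An element `a` of a C*-algebra has closed range if the spectrum of `|a|`
omits an interval `(0, ε)` for some `ε > 0`. -/
def HasClosedRange (a : A) : Prop :=
  ∃ ε > 0, ∀ x ∈ quasispectrum ℝ (cstarAbs a), x ∉ Set.Ioo 0 ε

/-- A choice of `ε > 0` witnessing that the spectrum of `|a|` omits `(0, ε)`
(junk value `1` if `a` does not have closed range). -/
noncomputable def crEps (a : A) : ℝ :=
  open Classical in if h : HasClosedRange a then h.choose else 1

/-- The partial isometry `𝐮 a` in the canonical polar decomposition of a closed
range element `a`, given by the explicit formula `𝐮 a = a * h (|a|)` where `h`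
is a continuous function with `h 0 = 0` and `h t = t⁻¹` for `t ≥ ε`
(junk values when `a` does not have closed range). -/
noncomputable def polarIso (a : A) : A :=
  a * cfcₙ (fun t : ℝ => t * ((max t (crEps a))⁻¹) ^ 2) (cstarAbs a)


namespace PolarAux
open Pointwise

variable {B : Type*} [CStarAlgebra B]

lemma cstarAbs_eq (a : B) : cstarAbs a = cfc Real.sqrt (star a * a) :=
  cfcₙ_eq_cfc Real.continuous_sqrt.continuousOn Real.sqrt_zero

lemma spec_nonneg (a : B) : ∀ t ∈ spectrum ℝ (star a * a), 0 ≤ t :=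
  spectrum_star_mul_self_nonneg

lemma cstarAbs_mul_self (a : B) : cstarAbs a * cstarAbs a = star a * a := by
  rw [cstarAbs_eq, ← cfc_mul ..]
  calc cfc (fun x => Real.sqrt x * Real.sqrt x) (star a * a)
      = cfc (id : ℝ → ℝ) (star a * a) := by
        apply cfc_congr
        intro x hx
        simp [Real.mul_self_sqrt (spec_nonneg a x hx)]
    _ = star a * a := cfc_id ℝ _

lemma spectrum_cstarAbs (a : B) :
    spectrum ℝ (cstarAbs a) = Real.sqrt '' spectrum ℝ (star a * a) := by
  rw [cstarAbs_eq]
  exact cfc_map_spectrum ..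

lemma hasClosedRange_iff {a : B} :
    HasClosedRange a ↔ ∃ ε > 0, ∀ x ∈ spectrum ℝ (cstarAbs a), x ∉ Set.Ioo 0 ε := by
  unfold HasClosedRange
  refine exists_congr fun ε => and_congr_right fun hε => ?_
  rw [quasispectrum_eq_spectrum_union_zero]
  constructor
  · intro h x hx; exact h x (Set.mem_union_left _ hx)
  · intro h x hx
    rcases hx with hx | hx
    · exact h x hx
    · simp only [Set.mem_singleton_iff] at hx
      subst hx
      simp [Set.mem_Ioo]

lemma crEps_pos (a : B) : 0 < crEps a := by
  rw [crEps]
  split_ifs with h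
  · exact h.choose_spec.1
  · exact one_pos

lemma crEps_gap {a : B} (ha : HasClosedRange a) :
    ∀ x ∈ spectrum ℝ (cstarAbs a), x ∉ Set.Ioo 0 (crEps a) := by
  intro x hx
  rw [crEps, dif_pos ha]
  have hx' : x ∈ quasispectrum ℝ (cstarAbs a) := by
    rw [quasispectrum_eq_spectrum_union_zero]
    exact Set.mem_union_left _ hx
  exact ha.choose_spec.2 x hx'

noncomputable def Gf (ε : ℝ) (t : ℝ) : ℝ := Real.sqrt t * ((max (Real.sqrt t) ε)⁻¹) ^ 2

lemma continuous_Gf {ε : ℝ} (hε : 0 < ε) : Continuous (Gf ε) := by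
  apply Real.continuous_sqrt.mul
  apply Continuous.pow
  exact Continuous.inv₀ (Real.continuous_sqrt.max continuous_const)
    fun t => (lt_of_lt_of_le hε (le_max_right _ _)).ne'

@[simp] lemma Gf_zero {ε : ℝ} : Gf ε 0 = 0 := by simp [Gf]

lemma gap_sq {a : B} {ε : ℝ} (hε : 0 < ε)
    (hgap : ∀ x ∈ spectrum ℝ (cstarAbs a), x ∉ Set.Ioo 0 ε) :
    ∀ t ∈ spectrum ℝ (star a * a), t ∉ Set.Ioo 0 (ε ^ 2) := by
  intro t ht hmem
  have h1 : Real.sqrt t ∈ spectrum ℝ (cstarAbs a) := spectrum_cstarAbs a ▸ ⟨t, ht, rfl⟩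
  refine hgap _ h1 ⟨Real.sqrt_pos.mpr hmem.1, ?_⟩
  calc Real.sqrt t < Real.sqrt (ε ^ 2) := Real.sqrt_lt_sqrt hmem.1.le hmem.2
    _ = ε := by rw [Real.sqrt_sq hε.le]

lemma Gf_on_spec {a : B} {ε t : ℝ} (hε : 0 < ε)
    (hgap : ∀ x ∈ spectrum ℝ (cstarAbs a), x ∉ Set.Ioo 0 ε)
    (ht : t ∈ spectrum ℝ (star a * a)) (ht0 : t ≠ 0) :
    ε ≤ Real.sqrt t ∧ Gf ε t = (Real.sqrt t)⁻¹ := by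
  have htpos : 0 < t := lt_of_le_of_ne (spec_nonneg a t ht) (Ne.symm ht0)
  have hs : Real.sqrt t ∈ spectrum ℝ (cstarAbs a) := spectrum_cstarAbs a ▸ ⟨t, ht, rfl⟩
  have hsp : 0 < Real.sqrt t := Real.sqrt_pos.mpr htpos
  have h1 : ε ≤ Real.sqrt t := by
    by_contra h
    exact hgap _ hs ⟨hsp, lt_of_not_ge h⟩
  refine ⟨h1, ?_⟩
  rw [Gf, max_eq_left h1, sq]
  field_simp

lemma isSelfAdjoint_star_mul_self (a : B) : IsSelfAdjoint (star a * a) :=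
  IsSelfAdjoint.star_mul_self a

lemma star_cfc (z : B) (f : ℝ → ℝ) : star (cfc f z) = cfc f z := by
  rw [← cfc_star]
  exact cfc_congr fun t _ => by simp

lemma polarIso_eq {a : B} (ha : HasClosedRange a) {ε : ℝ} (hε : 0 < ε)
    (hgap : ∀ x ∈ spectrum ℝ (cstarAbs a), x ∉ Set.Ioo 0 ε) :
    polarIso a = a * cfc (Gf ε) (star a * a) := by
  rw [polarIso]
  congr 1
  have h0 : (0:ℝ) < crEps a := crEps_pos a
  have hcont : Continuous (fun t : ℝ => t * ((max t (crEps a))⁻¹) ^ 2) :=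
    continuous_id.mul <| Continuous.pow
      (Continuous.inv₀ (continuous_id.max continuous_const)
        fun t => (lt_of_lt_of_le h0 (le_max_right _ _)).ne') 2
  rw [cfcₙ_eq_cfc hcont.continuousOn (by simp), cstarAbs_eq,
    ← cfc_comp _ Real.sqrt (star a * a) (isSelfAdjoint_star_mul_self a)
      hcont.continuousOn Real.continuous_sqrt.continuousOn]
  apply cfc_congr
  intro t ht
  by_cases ht0 : t = 0
  · subst ht0; simp [Function.comp]
  · obtain ⟨h1, h2⟩ := Gf_on_spec hε hgap ht ht0
    obtain ⟨h1', h2'⟩ := Gf_on_spec h0 (crEps_gap ha) ht ht0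
    have : (fun t : ℝ => t * ((max t (crEps a))⁻¹) ^ 2) ∘ Real.sqrt = Gf (crEps a) := rfl
    rw [this, h2', h2]

lemma star_mul_cfc (a : B) {f : ℝ → ℝ} (hf : Continuous f) :
    star (a * cfc f (star a * a)) * (a * cfc f (star a * a))
      = cfc (fun t => t * f t ^ 2) (star a * a) := by
  have hz := isSelfAdjoint_star_mul_self a
  rw [star_mul, star_cfc]
  calc cfc f (star a * a) * star a * (a * cfc f (star a * a))
      = cfc f (star a * a) * (star a * a) * cfc f (star a * a) := by
        simp only [mul_assoc]
    _ = cfc f (star a * a) * cfc id (star a * a) * cfc f (star a * a) := by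
        rw [cfc_id ℝ (star a * a)]
    _ = cfc (fun t => f t * t * f t) (star a * a) := by
        rw [cfc_mul (fun t => f t * t) f _ (hf.mul continuous_id).continuousOn hf.continuousOn,
          cfc_mul f (fun t : ℝ => t) _ hf.continuousOn continuous_id.continuousOn, cfc_id' ℝ _, cfc_id ℝ _]
    _ = cfc (fun t => t * f t ^ 2) (star a * a) := by
        apply cfc_congr; intro t _; ring

lemma sq_norm_mul_cfc (a : B) {f : ℝ → ℝ} (hf : Continuous f) :
    ‖a * cfc f (star a * a)‖ ^ 2 = ‖cfc (fun t => t * f t ^ 2) (star a * a)‖ := by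
  rw [← star_mul_cfc a hf, sq, ← CStarRing.norm_star_mul_self]

lemma mul_cfc_eq_zero (a : B) {f : ℝ → ℝ} (hf : Continuous f)
    (h : ∀ t ∈ spectrum ℝ (star a * a), t * f t ^ 2 = 0) :
    a * cfc f (star a * a) = 0 := by
  have h2 : ‖a * cfc f (star a * a)‖ ^ 2 = 0 := by
    rw [sq_norm_mul_cfc a hf]
    have : cfc (fun t : ℝ => t * f t ^ 2) (star a * a) = cfc (fun _ : ℝ => (0:ℝ)) (star a * a) :=
      cfc_congr fun t ht => h t ht
    rw [this]
    have h0 : cfc (fun _ : ℝ => (0:ℝ)) (star a * a) = 0 := by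
      simpa using cfc_zero ℝ (a := star a * a) (A := B)
    rw [h0, norm_zero]
  have := pow_eq_zero_iff (two_ne_zero) |>.mp h2
  exact norm_eq_zero.mp this

lemma mul_cfc_congr (a : B) {f g : ℝ → ℝ} (hf : Continuous f) (hg : Continuous g)
    (h : ∀ t ∈ spectrum ℝ (star a * a), t * (f t - g t) ^ 2 = 0) :
    a * cfc f (star a * a) = a * cfc g (star a * a) := by
  have h1 := mul_cfc_eq_zero a (f := fun t => f t - g t) (hf.sub hg) h
  rw [cfc_sub f g (star a * a) hf.continuousOn hg.continuousOn, mul_sub] at h1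
  exact sub_eq_zero.mp h1

lemma mul_cfc_eq_zero_of_mul_eq_zero {c z : B} (hz : IsSelfAdjoint z)
    (hznn : ∀ t ∈ spectrum ℝ z, 0 ≤ t) (hcz : c * z = 0)
    {f : ℝ → ℝ} (hf : Continuous f) (hf0 : f 0 = 0) : c * cfc f z = 0 := by
  have key : ∀ η : ℝ, 0 < η → ‖c * cfc f z‖ ≤ ‖c‖ * η := by
    intro η hη
    obtain ⟨δ, hδ, hδ'⟩ := Metric.continuous_iff.mp hf 0 η hη
    set ψ : ℝ → ℝ := fun t => f t * (max t δ)⁻¹ with hψdef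
    have hmaxpos : ∀ t : ℝ, (0:ℝ) < max t δ := fun t => lt_of_lt_of_le hδ (le_max_right t δ)
    have hψc : Continuous ψ :=
      hf.mul (Continuous.inv₀ (continuous_id.max continuous_const) fun t => (hmaxpos t).ne')
    have h1 : cfc (fun t : ℝ => t * ψ t) z = z * cfc ψ z := by
      rw [cfc_mul (fun t : ℝ => t) ψ z continuous_id.continuousOn hψc.continuousOn, cfc_id' ℝ z]
    have hidψ : Continuous (fun t : ℝ => t * ψ t) := continuous_id.mul hψc
    have hsum : cfc f z = cfc (fun t => f t - t * ψ t) z + cfc (fun t : ℝ => t * ψ t) z := by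
      rw [← cfc_add z (fun t => f t - t * ψ t) (fun t : ℝ => t * ψ t)
        ((hf.sub hidψ).continuousOn) hidψ.continuousOn]
      exact cfc_congr fun t _ => by ring
    have hbound : ‖cfc (fun t => f t - t * ψ t) z‖ ≤ η := by
      apply norm_cfc_le hη.le
      intro t ht
      have ht0 : 0 ≤ t := hznn t ht
      rw [Real.norm_eq_abs]
      by_cases hcase : δ ≤ t
      · have hmax : max t δ = t := max_eq_left hcase
        have htne : t ≠ 0 := (lt_of_lt_of_le hδ hcase).ne'
        have hexpr : f t - t * ψ t = 0 := by
          rw [hψdef]; simp only []; rw [hmax]; field_simp; simp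
        rw [hexpr, abs_zero]; exact hη.le
      · push_neg at hcase
        have hmax : max t δ = δ := max_eq_right hcase.le
        have hft : |f t| ≤ η := by
          have := hδ' t (by rw [Real.dist_eq, sub_zero]; rwa [abs_of_nonneg ht0])
          rw [Real.dist_eq, hf0, sub_zero] at this
          exact this.le
        have hexpr : f t - t * ψ t = f t * (1 - t * δ⁻¹) := by
          rw [hψdef]; simp only []; rw [hmax]; ring
        rw [hexpr, abs_mul]
        have h2 : t * δ⁻¹ < 1 := by
          rw [← div_eq_mul_inv]; exact (div_lt_one hδ).mpr hcase
        have h3 : 0 ≤ t * δ⁻¹ := by positivity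
        have h01 : |1 - t * δ⁻¹| ≤ 1 := by
          rw [abs_le]; constructor <;> [linarith; linarith]
        calc |f t| * |1 - t * δ⁻¹| ≤ η * 1 := mul_le_mul hft h01 (abs_nonneg _) hη.le
          _ = η := mul_one η
    calc ‖c * cfc f z‖ = ‖c * cfc (fun t => f t - t * ψ t) z + c * z * cfc ψ z‖ := by
          rw [hsum, mul_add, h1, ← mul_assoc]
      _ = ‖c * cfc (fun t => f t - t * ψ t) z‖ := by rw [hcz, zero_mul, add_zero]
      _ ≤ ‖c‖ * ‖cfc (fun t => f t - t * ψ t) z‖ := norm_mul_le _ _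
      _ ≤ ‖c‖ * η := mul_le_mul_of_nonneg_left hbound (norm_nonneg c)
  have hle : ∀ η : ℝ, 0 < η → ‖c * cfc f z‖ ≤ η := by
    intro η hη
    have h := key (η / (‖c‖ + 1)) (by positivity)
    refine h.trans ?_
    rw [mul_div_assoc', div_le_iff₀ (by positivity)]
    nlinarith [norm_nonneg c, hη.le]
  have : ‖c * cfc f z‖ ≤ 0 :=
    le_of_forall_pos_le_add (by intro ε hε; simpa using hle ε hε)
  exact norm_le_zero_iff.mp this

lemma cfc_mul_eq_zero_of_mul_eq_zero {c z : B} (hz : IsSelfAdjoint z)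
    (hznn : ∀ t ∈ spectrum ℝ z, 0 ≤ t) (hzc : z * c = 0)
    {f : ℝ → ℝ} (hf : Continuous f) (hf0 : f 0 = 0) : cfc f z * c = 0 := by
  have h1 : star c * z = 0 := by
    have := congrArg star hzc
    rwa [star_mul, hz.star_eq, star_zero] at this
  have h2 := mul_cfc_eq_zero_of_mul_eq_zero hz hznn h1 hf hf0
  have h3 := congrArg star h2
  rwa [star_mul, star_cfc, star_star, star_zero] at h3

lemma norm_le_one_of_proj {p : B} (hsa : IsSelfAdjoint p) (hid : p * p = p) : ‖p‖ ≤ 1 := by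
  have h : ‖p‖ * ‖p‖ = ‖p‖ := by
    calc ‖p‖ * ‖p‖ = ‖star p * p‖ := (CStarRing.norm_star_mul_self).symm
      _ = ‖p‖ := by rw [hsa.star_eq, hid]
  nlinarith [norm_nonneg p]

lemma ind_eq {a : B} {ε t : ℝ} (hε : 0 < ε)
    (hgap : ∀ x ∈ spectrum ℝ (cstarAbs a), x ∉ Set.Ioo 0 ε)
    (ht : t ∈ spectrum ℝ (star a * a)) (ht0 : t ≠ 0) :
    t * Gf ε t ^ 2 = 1 := by
  obtain ⟨h1, h2⟩ := Gf_on_spec hε hgap ht ht0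
  have htnn : 0 ≤ t := spec_nonneg a t ht
  rw [h2, inv_pow, Real.sq_sqrt htnn, mul_inv_cancel₀ ht0]

lemma polarIso_mul_cstarAbs {a : B} (ha : HasClosedRange a) : polarIso a * cstarAbs a = a := by
  have hεp : (0:ℝ) < crEps a := crEps_pos a
  have hgap := crEps_gap ha
  rw [polarIso_eq ha hεp hgap, cstarAbs_eq, mul_assoc,
    ← cfc_mul (Gf (crEps a)) Real.sqrt _ (continuous_Gf hεp).continuousOn
      Real.continuous_sqrt.continuousOn]
  have key := mul_cfc_congr a (f := fun t => Gf (crEps a) t * Real.sqrt t)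
      (g := fun _ => 1) ((continuous_Gf hεp).mul Real.continuous_sqrt) continuous_const ?_
  · rw [key]
    rw [show (fun _ : ℝ => (1:ℝ)) = (1 : ℝ → ℝ) from rfl, cfc_one ℝ (star a * a), mul_one]
  · intro t ht
    by_cases ht0 : t = 0
    · simp [ht0]
    · obtain ⟨h1, h2⟩ := Gf_on_spec hεp hgap ht ht0
      have hsne : Real.sqrt t ≠ 0 := (Real.sqrt_pos.mpr
        (lt_of_le_of_ne (spec_nonneg a t ht) (Ne.symm ht0))).ne'
      beta_reduce
      rw [h2, inv_mul_cancel₀ hsne]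
      ring

lemma star_polarIso_mul {a : B} (ha : HasClosedRange a) :
    star (polarIso a) * a = cstarAbs a := by
  have hεp : (0:ℝ) < crEps a := crEps_pos a
  have hgap := crEps_gap ha
  rw [polarIso_eq ha hεp hgap, star_mul, star_cfc, mul_assoc]
  have h1 : cfc (fun t => Gf (crEps a) t * t) (star a * a)
      = cfc (Gf (crEps a)) (star a * a) * cfc (fun t : ℝ => t) (star a * a) :=
    cfc_mul _ _ _ (continuous_Gf hεp).continuousOn continuous_id.continuousOn
  rw [cfc_id' ℝ (star a * a)] at h1
  rw [← h1, cstarAbs_eq]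
  apply cfc_congr
  intro t ht
  by_cases ht0 : t = 0
  · simp [ht0]
  · obtain ⟨_, h2⟩ := Gf_on_spec hεp hgap ht ht0
    have htnn : 0 ≤ t := spec_nonneg a t ht
    beta_reduce
    rw [h2]
    rw [inv_mul_eq_div, eq_comm, eq_div_iff (Real.sqrt_pos.mpr
      (lt_of_le_of_ne htnn (Ne.symm ht0))).ne', Real.mul_self_sqrt htnn]

lemma star_polarIso_mul_polarIso {a : B} (ha : HasClosedRange a) :
    star (polarIso a) * polarIso a
      = cfc (fun t => t * Gf (crEps a) t ^ 2) (star a * a) := by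
  rw [polarIso_eq ha (crEps_pos a) (crEps_gap ha)]
  exact star_mul_cfc a (continuous_Gf (crEps_pos a))

lemma q_sa {a : B} : IsSelfAdjoint (star (polarIso a) * polarIso a) := by
  rw [IsSelfAdjoint, star_mul, star_star]

lemma p_sa {a : B} : IsSelfAdjoint (polarIso a * star (polarIso a)) := by
  rw [IsSelfAdjoint, star_mul, star_star]

lemma q_idem {a : B} (ha : HasClosedRange a) :
    (star (polarIso a) * polarIso a) * (star (polarIso a) * polarIso a)
      = star (polarIso a) * polarIso a := by
  have hεp : (0:ℝ) < crEps a := crEps_pos a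
  have hcont : Continuous (fun t => t * Gf (crEps a) t ^ 2) :=
    continuous_id.mul ((continuous_Gf hεp).pow 2)
  rw [star_polarIso_mul_polarIso ha,
    ← cfc_mul _ _ _ hcont.continuousOn hcont.continuousOn]
  apply cfc_congr
  intro t ht
  by_cases ht0 : t = 0
  · simp [ht0]
  · beta_reduce
    rw [ind_eq hεp (crEps_gap ha) ht ht0, mul_one]

lemma a_mul_q {a : B} (ha : HasClosedRange a) :
    a * (star (polarIso a) * polarIso a) = a := by
  have hεp : (0:ℝ) < crEps a := crEps_pos a
  rw [star_polarIso_mul_polarIso ha]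
  have key := mul_cfc_congr a (f := fun t => t * Gf (crEps a) t ^ 2) (g := fun _ => 1)
    (continuous_id.mul ((continuous_Gf hεp).pow 2)) continuous_const ?_
  · rw [key, show (fun _ : ℝ => (1:ℝ)) = (1 : ℝ → ℝ) from rfl, cfc_one ℝ (star a * a), mul_one]
  · intro t ht
    by_cases ht0 : t = 0
    · simp [ht0]
    · beta_reduce
      rw [ind_eq hεp (crEps_gap ha) ht ht0]; ring

lemma abs_mul_q {a : B} (ha : HasClosedRange a) :
    cstarAbs a * (star (polarIso a) * polarIso a) = cstarAbs a := by
  have hεp : (0:ℝ) < crEps a := crEps_pos a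
  have hcont : Continuous (fun t : ℝ => t * Gf (crEps a) t ^ 2) :=
    continuous_id.mul ((continuous_Gf hεp).pow 2)
  rw [star_polarIso_mul_polarIso ha, cstarAbs_eq,
    ← cfc_mul Real.sqrt (fun t : ℝ => t * Gf (crEps a) t ^ 2) (star a * a)
      Real.continuous_sqrt.continuousOn hcont.continuousOn]
  apply cfc_congr
  intro t ht
  by_cases ht0 : t = 0
  · simp [ht0]
  · beta_reduce
    rw [ind_eq hεp (crEps_gap ha) ht ht0, mul_one]

lemma polarIso_mul_q {a : B} (ha : HasClosedRange a) :
    polarIso a * (star (polarIso a) * polarIso a) = polarIso a := by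
  have hεp : (0:ℝ) < crEps a := crEps_pos a
  have hgap := crEps_gap ha
  conv_lhs => rw [star_polarIso_mul_polarIso ha, polarIso_eq ha hεp hgap]
  conv_rhs => rw [polarIso_eq ha hεp hgap]
  have hcont : Continuous (fun t : ℝ => t * Gf (crEps a) t ^ 2) :=
    continuous_id.mul ((continuous_Gf hεp).pow 2)
  rw [mul_assoc, ← cfc_mul (Gf (crEps a)) (fun t : ℝ => t * Gf (crEps a) t ^ 2) (star a * a)
      (continuous_Gf hεp).continuousOn hcont.continuousOn]
  congr 1
  apply cfc_congr
  intro t ht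
  by_cases ht0 : t = 0
  · simp [ht0]
  · beta_reduce
    rw [ind_eq hεp hgap ht ht0, mul_one]

lemma p_idem {a : B} (ha : HasClosedRange a) :
    (polarIso a * star (polarIso a)) * (polarIso a * star (polarIso a))
      = polarIso a * star (polarIso a) := by
  have h := polarIso_mul_q ha
  calc (polarIso a * star (polarIso a)) * (polarIso a * star (polarIso a))
      = (polarIso a * (star (polarIso a) * polarIso a)) * star (polarIso a) := by
        simp only [mul_assoc]
    _ = polarIso a * star (polarIso a) := by rw [h]

lemma p_mul_a {a : B} (ha : HasClosedRange a) :
    (polarIso a * star (polarIso a)) * a = a := by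
  rw [mul_assoc, star_polarIso_mul ha, polarIso_mul_cstarAbs ha]

lemma norm_polarIso_le_one {a : B} (ha : HasClosedRange a) : ‖polarIso a‖ ≤ 1 := by
  have h1 : ‖polarIso a‖ * ‖polarIso a‖ = ‖star (polarIso a) * polarIso a‖ :=
    (CStarRing.norm_star_mul_self).symm
  have h2 : ‖star (polarIso a) * polarIso a‖ ≤ 1 := norm_le_one_of_proj q_sa (q_idem ha)
  nlinarith [norm_nonneg (polarIso a)]

lemma polarIso_ne_zero {a : B} (ha : HasClosedRange a) (h0 : a ≠ 0) : polarIso a ≠ 0 := by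
  intro h
  apply h0
  rw [← polarIso_mul_cstarAbs ha, h, zero_mul]

open Filter in
lemma exists_poly_near (f : ℝ → ℝ) (hf : Continuous f) (R : ℝ) {η : ℝ} (hη : 0 < η) :
    ∃ p : Polynomial ℝ, ∀ t ∈ Set.Icc (-R) R, |f t - p.eval t| ≤ η := by
  have h := polynomialFunctions_closure_eq_top (-R) R
  set F : C(Set.Icc (-R) R, ℝ) := ⟨fun t => f t.1, hf.comp continuous_subtype_val⟩ with hF
  have hFmem : F ∈ closure (polynomialFunctions (Set.Icc (-R) R) : Set C(Set.Icc (-R) R, ℝ)) := by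
    have : F ∈ (polynomialFunctions (Set.Icc (-R) R)).topologicalClosure := by
      rw [h]; trivial
    exact this
  obtain ⟨b, hb, hdist⟩ := Metric.mem_closure_iff.mp hFmem η hη
  rw [polynomialFunctions_coe] at hb
  obtain ⟨p, rfl⟩ := hb
  refine ⟨p, fun t ht => ?_⟩
  have := ContinuousMap.dist_apply_le_dist (f := F)
    (g := Polynomial.toContinuousMapOnAlgHom (Set.Icc (-R) R) p) ⟨t, ht⟩
  rw [Real.dist_eq] at this
  have h2 : (Polynomial.toContinuousMapOnAlgHom (Set.Icc (-R) R) p) ⟨t, ht⟩ = p.eval t := rfl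
  rw [h2] at this
  calc |f t - p.eval t| ≤ dist F (Polynomial.toContinuousMapOnAlgHom (Set.Icc (-R) R) p) := this
    _ ≤ η := hdist.le

section Nontrivial
variable [Nontrivial B]

lemma spec_abs_le {x : B} {t : ℝ} (ht : t ∈ spectrum ℝ x) : |t| ≤ ‖x‖ := by
  simpa [Real.norm_eq_abs] using spectrum.norm_le_norm_of_mem ht

lemma cfc_near_poly {x : B} (hx : IsSelfAdjoint x) {f : ℝ → ℝ} (hf : Continuous f)
    {R η : ℝ} (hxR : ‖x‖ ≤ R) {p : Polynomial ℝ}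
    (hp : ∀ t ∈ Set.Icc (-R) R, |f t - p.eval t| ≤ η) (hη : 0 ≤ η) :
    ‖cfc f x - Polynomial.aeval x p‖ ≤ η := by
  rw [← cfc_polynomial p x hx, ← cfc_sub f p.eval x hf.continuousOn p.continuous.continuousOn]
  apply norm_cfc_le hη
  intro t ht
  have h1 : |t| ≤ R := (spec_abs_le ht).trans hxR
  rw [Real.norm_eq_abs]
  exact hp t (Set.mem_Icc.mpr (abs_le.mp h1))

open Filter in
lemma tendsto_cfc_of_tendsto {f : ℝ → ℝ} (hf : Continuous f)
    {z : ℕ → B} {z₀ : B} (hsa : ∀ n, IsSelfAdjoint (z n)) (hsa₀ : IsSelfAdjoint z₀)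
    (hz : Tendsto z atTop (nhds z₀)) :
    Tendsto (fun n => cfc f (z n)) atTop (nhds (cfc f z₀)) := by
  rw [Metric.tendsto_atTop]
  intro η hη
  set R := ‖z₀‖ + 1 with hR
  obtain ⟨p, hp⟩ := exists_poly_near f hf R (η := η/4) (by positivity)
  have h1 : Tendsto (fun n => Polynomial.aeval (z n) p) atTop (nhds (Polynomial.aeval z₀ p)) :=
    (Polynomial.continuous_aeval p).continuousAt.tendsto.comp hz
  have h2 : ∀ᶠ n in atTop, ‖z n‖ ≤ R := by
    have : Tendsto (fun n => ‖z n‖) atTop (nhds ‖z₀‖) := hz.norm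
    have := this.eventually_le_const (show ‖z₀‖ < R by simp [hR])
    exact this
  have h3 : ∀ᶠ n in atTop, ‖Polynomial.aeval (z n) p - Polynomial.aeval z₀ p‖ < η/4 := by
    have := Metric.tendsto_atTop.mp h1 (η/4) (by positivity)
    obtain ⟨N, hN⟩ := this
    exact eventually_atTop.mpr ⟨N, fun n hn => by simpa [dist_eq_norm] using hN n hn⟩
  have hz0R : ‖z₀‖ ≤ R := by simp [hR]
  rw [eventually_atTop] at h2 h3
  obtain ⟨N₂, hN₂⟩ := h2
  obtain ⟨N₃, hN₃⟩ := h3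
  refine ⟨max N₂ N₃, fun n hn => ?_⟩
  have e2 := hN₂ n (le_trans (le_max_left _ _) hn)
  have e3 := hN₃ n (le_trans (le_max_right _ _) hn)
  have b1 : ‖cfc f (z n) - Polynomial.aeval (z n) p‖ ≤ η/4 :=
    cfc_near_poly (hsa n) hf e2 hp (by positivity)
  have b2 : ‖cfc f z₀ - Polynomial.aeval z₀ p‖ ≤ η/4 :=
    cfc_near_poly hsa₀ hf hz0R hp (by positivity)
  rw [dist_eq_norm]
  calc ‖cfc f (z n) - cfc f z₀‖
      = ‖(cfc f (z n) - Polynomial.aeval (z n) p)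
          + (Polynomial.aeval (z n) p - Polynomial.aeval z₀ p)
          - (cfc f z₀ - Polynomial.aeval z₀ p)‖ := by congr 1; abel
    _ ≤ ‖(cfc f (z n) - Polynomial.aeval (z n) p)
          + (Polynomial.aeval (z n) p - Polynomial.aeval z₀ p)‖
          + ‖cfc f z₀ - Polynomial.aeval z₀ p‖ := norm_sub_le _ _
    _ ≤ ‖cfc f (z n) - Polynomial.aeval (z n) p‖
          + ‖Polynomial.aeval (z n) p - Polynomial.aeval z₀ p‖
          + ‖cfc f z₀ - Polynomial.aeval z₀ p‖ := by
            gcongr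
            exact norm_add_le _ _
    _ < η := by linarith

lemma notMem_spectrum_of_near {x y : B} (hy : IsSelfAdjoint y) {t d : ℝ}
    (hd : 0 < d) (hdist : ∀ s ∈ spectrum ℝ y, d ≤ |t - s|) (hxy : ‖x - y‖ < d) :
    t ∉ spectrum ℝ x := by
  have hne : ∀ s ∈ spectrum ℝ y, t - s ≠ 0 := by
    intro s hs h
    have := hdist s hs
    rw [h, abs_zero] at this
    linarith
  have hres : ContinuousOn (fun s : ℝ => (t - s)⁻¹) (spectrum ℝ y) :=
    ContinuousOn.inv₀ (by fun_prop) hne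
  set r := cfc (fun s : ℝ => (t - s)⁻¹) y with hr
  have hsub : algebraMap ℝ B t - y = cfc (fun s : ℝ => t - s) y := by
    rw [cfc_sub (fun _ : ℝ => t) (fun s : ℝ => s) y continuous_const.continuousOn
      continuous_id.continuousOn, cfc_const t y hy, cfc_id' ℝ y hy]
  have hone : cfc (fun s : ℝ => (t - s) * (t - s)⁻¹) y = 1 := by
    have : cfc (fun s : ℝ => (t - s) * (t - s)⁻¹) y = cfc (fun _ : ℝ => (1:ℝ)) y :=
      cfc_congr fun s hs => mul_inv_cancel₀ (hne s hs)
    rw [this, show (fun _ : ℝ => (1:ℝ)) = (1 : ℝ → ℝ) from rfl, cfc_one ℝ y]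
  have hmul : (algebraMap ℝ B t - y) * r = 1 := by
    rw [hsub, hr, ← cfc_mul (fun s : ℝ => t - s) (fun s : ℝ => (t - s)⁻¹) y
      (continuous_const.sub continuous_id).continuousOn hres, hone]
  have hmul' : r * (algebraMap ℝ B t - y) = 1 := by
    rw [hsub, hr, ← cfc_mul (fun s : ℝ => (t - s)⁻¹) (fun s : ℝ => t - s) y
      hres (continuous_const.sub continuous_id).continuousOn]
    rw [show (fun s : ℝ => (t - s)⁻¹ * (t - s)) = fun s : ℝ => (t - s) * (t - s)⁻¹ from
      funext fun s => mul_comm _ _, hone]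
  set u : Bˣ := ⟨algebraMap ℝ B t - y, r, hmul, hmul'⟩ with hu
  have hrnorm : ‖r‖ ≤ d⁻¹ := by
    apply norm_cfc_le (by positivity)
    intro s hs
    rw [Real.norm_eq_abs, abs_inv]
    exact inv_anti₀ hd (hdist s hs)
  have hrpos : 0 < ‖r‖ := by
    rcases eq_or_lt_of_le (norm_nonneg r) with h | h
    · exfalso
      have : r = 0 := norm_eq_zero.mp h.symm
      rw [this, mul_zero] at hmul
      exact one_ne_zero hmul.symm
    · exact h
  intro htx
  have hunit : IsUnit (algebraMap ℝ B t - x) := by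
    refine (Units.ofNearby u (algebraMap ℝ B t - x) ?_).isUnit
    have h1 : (algebraMap ℝ B t - x) - (u : B) = y - x := by
      rw [hu]; simp
    rw [h1]
    have h2 : ‖y - x‖ < d := by rwa [norm_sub_rev]
    have h3 : (↑u⁻¹ : B) = r := rfl
    rw [h3]
    calc ‖y - x‖ < d := h2
      _ ≤ ‖r‖⁻¹ := by
          have := inv_anti₀ hrpos hrnorm
          rwa [inv_inv] at this
  exact (spectrum.mem_iff.mp htx) hunit

lemma pow_add_orth {z₁ z₂ : B} (h12 : z₁ * z₂ = 0) (h21 : z₂ * z₁ = 0) :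
    ∀ n : ℕ, (z₁ + z₂) ^ (n + 1) = z₁ ^ (n + 1) + z₂ ^ (n + 1) := by
  intro n
  induction n with
  | zero => simp
  | succ n ih =>
    have e1 : z₁ ^ (n+1) * z₂ = 0 := by
      rw [pow_succ, mul_assoc, h12, mul_zero]
    have e2 : z₂ ^ (n+1) * z₁ = 0 := by
      rw [pow_succ, mul_assoc, h21, mul_zero]
    rw [pow_succ, ih, add_mul, mul_add, mul_add, e1, e2, ← pow_succ, ← pow_succ]
    abel

lemma aeval_add_orth {z₁ z₂ : B} (h12 : z₁ * z₂ = 0) (h21 : z₂ * z₁ = 0)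
    {p : Polynomial ℝ} (hp : p.coeff 0 = 0) :
    Polynomial.aeval (z₁ + z₂) p = Polynomial.aeval z₁ p + Polynomial.aeval z₂ p := by
  rw [Polynomial.aeval_eq_sum_range (z₁ + z₂), Polynomial.aeval_eq_sum_range z₁,
    Polynomial.aeval_eq_sum_range z₂, ← Finset.sum_add_distrib]
  apply Finset.sum_congr rfl
  intro i _
  cases i with
  | zero => simp [hp]
  | succ n => rw [pow_add_orth h12 h21 n, smul_add]

lemma cfc_add_orth {z₁ z₂ : B} (h₁ : IsSelfAdjoint z₁) (h₂ : IsSelfAdjoint z₂)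
    (h12 : z₁ * z₂ = 0) {f : ℝ → ℝ} (hf : Continuous f) (hf0 : f 0 = 0) :
    cfc f (z₁ + z₂) = cfc f z₁ + cfc f z₂ := by
  have h21 : z₂ * z₁ = 0 := by
    have := congrArg star h12
    rwa [star_mul, h₁.star_eq, h₂.star_eq, star_zero] at this
  have hsum_sa : IsSelfAdjoint (z₁ + z₂) := h₁.add h₂
  have key : ∀ η : ℝ, 0 < η → ‖cfc f (z₁ + z₂) - (cfc f z₁ + cfc f z₂)‖ ≤ 6 * η := by
    intro η hη
    set R := ‖z₁‖ + ‖z₂‖ + 1 with hRdef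
    have hR0 : (0:ℝ) ≤ R := by positivity
    obtain ⟨p, hp⟩ := exists_poly_near f hf R hη
    set q := p - Polynomial.C (p.coeff 0) with hqdef
    have hq0 : q.coeff 0 = 0 := by simp [hqdef]
    have hp0 : |p.coeff 0| ≤ η := by
      have h0mem : (0:ℝ) ∈ Set.Icc (-R) R := by
        constructor <;> [linarith; linarith]
      have := hp 0 h0mem
      rwa [hf0, ← Polynomial.coeff_zero_eq_eval_zero, zero_sub, abs_neg] at this
    have hq : ∀ t ∈ Set.Icc (-R) R, |f t - q.eval t| ≤ 2*η := by
      intro t ht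
      have h1 := hp t ht
      have h2 : q.eval t = p.eval t - p.coeff 0 := by simp [hqdef]
      rw [h2]
      calc |f t - (p.eval t - p.coeff 0)| = |(f t - p.eval t) + p.coeff 0| := by ring_nf
        _ ≤ |f t - p.eval t| + |p.coeff 0| := abs_add_le _ _
        _ ≤ 2*η := by linarith
    have approx : ∀ x : B, IsSelfAdjoint x → ‖x‖ ≤ R →
        ‖cfc f x - Polynomial.aeval x q‖ ≤ 2*η :=
      fun x hx hxR => cfc_near_poly hx hf hxR hq (by positivity)
    have hsplit := aeval_add_orth h12 h21 hq0
    have e : cfc f (z₁+z₂) - (cfc f z₁ + cfc f z₂)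
        = (cfc f (z₁+z₂) - Polynomial.aeval (z₁+z₂) q)
          - (cfc f z₁ - Polynomial.aeval z₁ q) - (cfc f z₂ - Polynomial.aeval z₂ q) := by
      rw [hsplit]; abel
    have b0 : ‖cfc f (z₁+z₂) - Polynomial.aeval (z₁+z₂) q‖ ≤ 2*η := by
      apply approx _ hsum_sa
      calc ‖z₁ + z₂‖ ≤ ‖z₁‖ + ‖z₂‖ := norm_add_le _ _
        _ ≤ R := by rw [hRdef]; linarith
    have b1 : ‖cfc f z₁ - Polynomial.aeval z₁ q‖ ≤ 2*η := by
      apply approx _ h₁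
      rw [hRdef]; linarith [norm_nonneg z₂]
    have b2 : ‖cfc f z₂ - Polynomial.aeval z₂ q‖ ≤ 2*η := by
      apply approx _ h₂
      rw [hRdef]; linarith [norm_nonneg z₁]
    rw [e]
    calc ‖_ - _ - _‖ ≤ ‖_ - _‖ + ‖cfc f z₂ - Polynomial.aeval z₂ q‖ := norm_sub_le _ _
      _ ≤ ‖cfc f (z₁+z₂) - Polynomial.aeval (z₁+z₂) q‖
          + ‖cfc f z₁ - Polynomial.aeval z₁ q‖
          + ‖cfc f z₂ - Polynomial.aeval z₂ q‖ := by
            gcongr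
            exact norm_sub_le _ _
      _ ≤ 6 * η := by linarith
  have hle : ‖cfc f (z₁ + z₂) - (cfc f z₁ + cfc f z₂)‖ ≤ 0 := by
    apply le_of_forall_pos_le_add
    intro ε hε
    have := key (ε/6) (by positivity)
    linarith
  exact sub_eq_zero.mp (norm_le_zero_iff.mp hle)

end Nontrivial

noncomputable def bump (ε : ℝ) (t : ℝ) : ℝ := max 0 (min t (ε - t))

lemma continuous_bump (ε : ℝ) : Continuous (bump ε) :=
  continuous_const.max (continuous_id.min (continuous_const.sub continuous_id))

@[simp] lemma bump_zero (ε : ℝ) : bump ε 0 = 0 := by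
  simp [bump]

lemma bump_eq_zero_of_notMem {ε t : ℝ} (h : t ∉ Set.Ioo 0 ε) : bump ε t = 0 := by
  rw [bump, max_eq_left]
  rw [Set.mem_Ioo, not_and_or] at h
  rcases h with h | h
  · exact min_le_of_left_le (not_lt.mp h)
  · exact min_le_of_right_le (by linarith [not_lt.mp h])

lemma bump_pos_of_mem {ε t : ℝ} (h : t ∈ Set.Ioo 0 ε) : 0 < bump ε t := by
  rw [bump]
  calc (0:ℝ) < min t (ε - t) := lt_min h.1 (by linarith [h.2])
    _ ≤ max 0 (min t (ε - t)) := le_max_right _ _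

lemma gap_of_cfc_bump_eq_zero [Nontrivial B] {x : B} (hx : IsSelfAdjoint x) {ε : ℝ}
    (h : cfc (bump ε) x = 0) : ∀ t ∈ spectrum ℝ x, t ∉ Set.Ioo 0 ε := by
  intro t ht hmem
  have h1 := norm_apply_le_norm_cfc (bump ε) x ht (continuous_bump ε).continuousOn hx
  rw [h, norm_zero, Real.norm_eq_abs] at h1
  have h2 := bump_pos_of_mem hmem
  rw [abs_of_pos h2] at h1
  linarith

lemma cfc_bump_eq_zero_of_gap {x : B} {ε : ℝ}
    (h : ∀ t ∈ spectrum ℝ x, t ∉ Set.Ioo 0 ε) : cfc (bump ε) x = 0 := by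
  have : cfc (bump ε) x = cfc (fun _ : ℝ => (0:ℝ)) x :=
    cfc_congr fun t ht => bump_eq_zero_of_notMem (h t ht)
  rw [this]
  simpa using cfc_zero ℝ (a := x) (A := B)

lemma hasClosedRange_of_gap_sq {b : B} {ε : ℝ} (hε : 0 < ε)
    (hgap : ∀ t ∈ spectrum ℝ (star b * b), t ∉ Set.Ioo 0 ε) : HasClosedRange b := by
  rw [hasClosedRange_iff]
  refine ⟨Real.sqrt ε, Real.sqrt_pos.mpr hε, ?_⟩
  intro x hx hmem
  rw [spectrum_cstarAbs] at hx
  obtain ⟨t, ht, rfl⟩ := hx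
  refine hgap t ht ⟨Real.sqrt_pos.mp hmem.1, ?_⟩
  have htnn : 0 ≤ t := spec_nonneg b t ht
  have := hmem.2
  nlinarith [Real.sq_sqrt htnn, Real.sqrt_nonneg ε, Real.sq_sqrt hε.le, Real.sqrt_nonneg t]

lemma gap_abs_of_gap_sq {b : B} {ε : ℝ} (hε : 0 < ε)
    (hgap : ∀ t ∈ spectrum ℝ (star b * b), t ∉ Set.Ioo 0 (ε^2)) :
    ∀ x ∈ spectrum ℝ (cstarAbs b), x ∉ Set.Ioo 0 ε := by
  intro x hx hmem
  rw [spectrum_cstarAbs] at hx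
  obtain ⟨t, ht, rfl⟩ := hx
  refine hgap t ht ⟨Real.sqrt_pos.mp hmem.1, ?_⟩
  have htnn := spec_nonneg b t ht
  nlinarith [Real.sq_sqrt htnn, hmem.2, Real.sqrt_nonneg t, hε]

lemma smul_star_mul_smul {b : B} (t : ℝ) : star (t • b) * (t • b) = (t^2) • (star b * b) := by
  rw [star_smul, star_trivial, smul_mul_assoc, mul_smul_comm, smul_smul, sq]

lemma spec_smul_sq_gap {b : B} (hb : HasClosedRange b) {t : ℝ} (ht : 0 < t) :
    ∀ s ∈ spectrum ℝ (star (t • b) * (t • b)), s ∉ Set.Ioo 0 ((t * crEps b)^2) := by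
  have hz := smul_star_mul_smul (b := b) t
  intro s hs hmem
  rw [hz] at hs
  have hne : (t^2 : ℝ) ≠ 0 := by positivity
  have hs2 : s ∈ (Units.mk0 (t^2) hne : ℝˣ) • spectrum ℝ (star b * b) := by
    rw [← spectrum.unit_smul_eq_smul]
    simpa [Units.smul_def] using hs
  obtain ⟨s', hs', rfl⟩ := Set.mem_smul_set.mp hs2
  have hsmul : (Units.mk0 (t^2) hne : ℝˣ) • s' = t^2 * s' := rfl
  rw [hsmul] at hmem
  have hεb := crEps_pos b
  refine gap_sq hεb (crEps_gap hb) s' hs' ⟨?_, ?_⟩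
  · have := hmem.1
    nlinarith [sq_nonneg t]
  · have := hmem.2
    nlinarith [sq_nonneg (t * crEps b)]

lemma hasClosedRange_smul {b : B} (hb : HasClosedRange b) {t : ℝ} (ht : 0 < t) :
    HasClosedRange (t • b) := by
  have hεb := crEps_pos b
  exact hasClosedRange_of_gap_sq (by positivity) (spec_smul_sq_gap hb ht)

lemma polarIso_smul {b : B} (hb : HasClosedRange b) {t : ℝ} (ht : 0 < t) :
    polarIso (t • b) = polarIso b := by
  have hεb := crEps_pos b
  have hw : HasClosedRange (t • b) := hasClosedRange_smul hb ht
  have htεb : (0:ℝ) < t * crEps b := by positivity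
  have hgapw : ∀ x ∈ spectrum ℝ (cstarAbs (t • b)), x ∉ Set.Ioo 0 (t * crEps b) :=
    gap_abs_of_gap_sq htεb (spec_smul_sq_gap hb ht)
  rw [polarIso_eq hw htεb hgapw, polarIso_eq hb hεb (crEps_gap hb)]
  have hzsa : IsSelfAdjoint (star b * b) := isSelfAdjoint_star_mul_self b
  have hz : star (t • b) * (t • b) = cfc (fun s : ℝ => t^2 * s) (star b * b) := by
    rw [cfc_const_mul_id (t^2) (star b * b) hzsa, smul_star_mul_smul]
  rw [hz, ← cfc_comp (Gf (t * crEps b)) (fun s : ℝ => t^2 * s) (star b * b) hzsa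
    (continuous_Gf htεb).continuousOn (continuous_const.mul continuous_id).continuousOn]
  rw [smul_mul_assoc, ← mul_smul_comm]
  rw [show t • cfc ((Gf (t * crEps b)) ∘ (fun s : ℝ => t^2 * s)) (star b * b)
      = cfc (fun s : ℝ => t * Gf (t * crEps b) (t^2 * s)) (star b * b) by
    rw [← cfc_smul t ((Gf (t * crEps b)) ∘ (fun s : ℝ => t^2 * s)) (star b * b)
      (((continuous_Gf htεb).comp (continuous_const.mul continuous_id)).continuousOn)]
    apply cfc_congr
    intro s _
    simp [Function.comp, smul_eq_mul]]
  apply mul_cfc_congr b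
    (continuous_const.mul ((continuous_Gf htεb).comp (continuous_const.mul continuous_id)))
    (continuous_Gf hεb)
  intro s hs
  by_cases hs0 : s = 0
  · simp [hs0]
  · simp only [Pi.mul_apply, Function.comp_apply, id_eq]
    obtain ⟨h1, h2⟩ := Gf_on_spec hεb (crEps_gap hb) hs hs0
    have hsnn : 0 ≤ s := spec_nonneg b s hs
    have hspos : 0 < s := lt_of_le_of_ne hsnn (Ne.symm hs0)
    have hsqrtpos : 0 < Real.sqrt s := Real.sqrt_pos.mpr hspos
    have hsqrt : Real.sqrt (t^2 * s) = t * Real.sqrt s := by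
      rw [Real.sqrt_mul (by positivity), Real.sqrt_sq ht.le]
    have hmax : max (Real.sqrt (t^2 * s)) (t * crEps b) = t * Real.sqrt s := by
      rw [hsqrt, max_eq_left (by nlinarith)]
    have hGf : Gf (t * crEps b) (t^2 * s) = (t * Real.sqrt s)⁻¹ := by
      rw [Gf, hmax, hsqrt, sq]
      field_simp
    rw [hGf, h2, mul_inv]
    have : t * (t⁻¹ * (Real.sqrt s)⁻¹) - (Real.sqrt s)⁻¹ = 0 := by
      field_simp; simp
    rw [this]
    ring

open Filter in
lemma forward_aux {a : B} [Nontrivial B] (ha : HasClosedRange a) {x : B}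
    (hb : HasClosedRange ((1 - polarIso a * star (polarIso a)) * x * (1 - star (polarIso a) * polarIso a)))
    (hbne : (1 - polarIso a * star (polarIso a)) * x * (1 - star (polarIso a) * polarIso a) ≠ 0) :
    ¬ ContinuousWithinAt (polarIso : B → B) {c : B | HasClosedRange c} a := by
  intro hcont
  set u := polarIso a with hu
  set b := (1 - u * star u) * x * (1 - star u * u) with hbdef
  have habs_sa : star (cstarAbs a) = cstarAbs a := by rw [cstarAbs_eq]; exact star_cfc _ _
  have h1 : cstarAbs a * star u = star a := by
    have := congrArg star (polarIso_mul_cstarAbs ha)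
    rwa [star_mul, habs_sa] at this
  have h2 : star a * u = cstarAbs a := by
    have := congrArg star (star_polarIso_mul ha)
    rwa [star_mul, star_star, habs_sa] at this
  have hp0 : star a * (1 - u * star u) = 0 := by
    rw [mul_sub, mul_one, ← mul_assoc, h2, h1, sub_self]
  have hq0 : a * (1 - star u * u) = 0 := by
    rw [mul_sub, mul_one, a_mul_q ha, sub_self]
  have hq0' : (1 - star u * u) * star a = 0 := by
    have := congrArg star hq0
    rwa [star_mul, star_sub, star_one, star_mul, star_star, star_zero] at this
  have hsab : star a * b = 0 := by
    rw [hbdef, ← mul_assoc, ← mul_assoc, hp0, zero_mul, zero_mul]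
  have hbsa : b * star a = 0 := by
    rw [hbdef, mul_assoc, hq0', mul_zero]
  have hab : a * star b = 0 := by
    have := congrArg star hbsa
    rwa [star_mul, star_star, star_zero] at this
  have hbsa' : b * (star a * a) = 0 := by rw [← mul_assoc, hbsa, zero_mul]
  have habz : a * (star b * b) = 0 := by rw [← mul_assoc, hab, zero_mul]
  have hz12 : (star a * a) * (star b * b) = 0 := by
    calc (star a * a) * (star b * b) = star a * (a * star b) * b := by simp only [mul_assoc]
      _ = 0 := by rw [hab, mul_zero, zero_mul]
  have key : ∀ t : ℝ, 0 < t → HasClosedRange (a + t • b) ∧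
      polarIso (a + t • b) = u + polarIso b := by
    intro t ht
    set w := t • b with hw
    have hwz : star w * w = (t^2) • (star b * b) := smul_star_mul_smul t
    have c1 : star a * w = 0 := by rw [hw, mul_smul_comm, hsab, smul_zero]
    have c2 : star w * a = 0 := by
      have := congrArg star c1
      rwa [star_mul, star_star, star_zero] at this
    have hsum : star (a + w) * (a + w) = star a * a + star w * w := by
      rw [star_add, add_mul, mul_add, mul_add, c1, c2]
      abel
    have hεa := crEps_pos a
    have hεb := crEps_pos b
    set εt := min (crEps a) (t * crEps b) with hεt
    have hεtpos : 0 < εt := lt_min hεa (by positivity)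
    have hεtle1 : εt ≤ crEps a := min_le_left _ _
    have hεtle2 : εt ≤ t * crEps b := min_le_right _ _
    have gap1 : ∀ s ∈ spectrum ℝ (star a * a), s ∉ Set.Ioo 0 (εt^2) := by
      intro s hs hmem
      refine gap_sq hεa (crEps_gap ha) s hs ⟨hmem.1, lt_of_lt_of_le hmem.2 ?_⟩
      exact pow_le_pow_left₀ hεtpos.le hεtle1 2
    have gap2 : ∀ s ∈ spectrum ℝ (star w * w), s ∉ Set.Ioo 0 (εt^2) := by
      intro s hs hmem
      refine spec_smul_sq_gap hb ht s hs ⟨hmem.1, lt_of_lt_of_le hmem.2 ?_⟩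
      exact pow_le_pow_left₀ hεtpos.le hεtle2 2
    have hz12w : (star a * a) * (star w * w) = 0 := by
      rw [hwz, mul_smul_comm, hz12, smul_zero]
    have hwsa : IsSelfAdjoint (star w * w) := isSelfAdjoint_star_mul_self w
    have hasa : IsSelfAdjoint (star a * a) := isSelfAdjoint_star_mul_self a
    have hgapsum : ∀ s ∈ spectrum ℝ (star (a+w) * (a+w)), s ∉ Set.Ioo 0 (εt^2) := by
      apply gap_of_cfc_bump_eq_zero (isSelfAdjoint_star_mul_self (a+w))
      rw [hsum, cfc_add_orth hasa hwsa hz12w (continuous_bump _) (bump_zero _),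
        cfc_bump_eq_zero_of_gap gap1, cfc_bump_eq_zero_of_gap gap2, add_zero]
    have hcr : HasClosedRange (a + w) := hasClosedRange_of_gap_sq (by positivity) hgapsum
    have hgapabs := gap_abs_of_gap_sq hεtpos hgapsum
    have hgapabs_a : ∀ s ∈ spectrum ℝ (cstarAbs a), s ∉ Set.Ioo 0 εt := by
      intro s hs hmem
      exact crEps_gap ha s hs ⟨hmem.1, lt_of_lt_of_le hmem.2 hεtle1⟩
    have hwcr : HasClosedRange w := hasClosedRange_smul hb ht
    have hgapabs_w : ∀ s ∈ spectrum ℝ (cstarAbs w), s ∉ Set.Ioo 0 εt := by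
      intro s hs hmem
      exact gap_abs_of_gap_sq (show (0:ℝ) < t * crEps b by positivity)
        (spec_smul_sq_gap hb ht) s hs ⟨hmem.1, lt_of_lt_of_le hmem.2 hεtle2⟩
    refine ⟨hcr, ?_⟩
    have c3 : a * cfc (Gf εt) (star w * w) = 0 :=
      mul_cfc_eq_zero_of_mul_eq_zero hwsa (spec_nonneg w)
        (by rw [hwz, mul_smul_comm, habz, smul_zero]) (continuous_Gf hεtpos) Gf_zero
    have c4 : w * cfc (Gf εt) (star a * a) = 0 :=
      mul_cfc_eq_zero_of_mul_eq_zero hasa (spec_nonneg a)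
        (by rw [hw, smul_mul_assoc, hbsa', smul_zero]) (continuous_Gf hεtpos) Gf_zero
    calc polarIso (a + w) = (a + w) * cfc (Gf εt) (star (a+w) * (a+w)) :=
          polarIso_eq hcr hεtpos hgapabs
      _ = (a + w) * (cfc (Gf εt) (star a * a) + cfc (Gf εt) (star w * w)) := by
          rw [hsum, cfc_add_orth hasa hwsa hz12w (continuous_Gf hεtpos) Gf_zero]
      _ = a * cfc (Gf εt) (star a * a) + w * cfc (Gf εt) (star w * w) := by
          rw [add_mul, mul_add, mul_add, c3, c4]
          abel
      _ = u + polarIso b := by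
          rw [← polarIso_eq ha hεtpos hgapabs_a, ← polarIso_eq hwcr hεtpos hgapabs_w, ← hu,
            hw, polarIso_smul hb ht]
  have hvne : polarIso b ≠ 0 := polarIso_ne_zero hb hbne
  set seq : ℕ → B := fun n => a + (1/((n:ℝ)+1)) • b with hseq
  have hpos : ∀ n : ℕ, (0:ℝ) < 1/((n:ℝ)+1) := fun n => by positivity
  have hseqt : Tendsto seq atTop (nhds a) := by
    have h0 : Tendsto (fun n : ℕ => (1/((n:ℝ)+1))) atTop (nhds 0) :=
      tendsto_one_div_add_atTop_nhds_zero_nat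
    have h1 := h0.smul_const b
    rw [zero_smul] at h1
    have h2 := (tendsto_const_nhds : Tendsto (fun _ : ℕ => a) atTop (nhds a)).add h1
    rw [add_zero] at h2
    exact h2
  have hmem : ∀ n, seq n ∈ {c : B | HasClosedRange c} := fun n => (key _ (hpos n)).1
  have htend : Tendsto (fun n => polarIso (seq n)) atTop (nhds u) := by
    have hseqt' : Tendsto seq atTop (nhdsWithin a {c : B | HasClosedRange c}) :=
      tendsto_nhdsWithin_iff.mpr ⟨hseqt, Filter.Eventually.of_forall hmem⟩
    exact hcont.tendsto.comp hseqt'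
  have hconst : (fun n => polarIso (seq n)) = fun _ => u + polarIso b :=
    funext fun n => (key _ (hpos n)).2
  rw [hconst] at htend
  have h5 := tendsto_nhds_unique htend tendsto_const_nhds
  apply hvne
  exact left_eq_add.mp h5

lemma cfc_mid_mul {z : B} (hz : IsSelfAdjoint z) {f g : ℝ → ℝ}
    (hf : Continuous f) (hg : Continuous g) :
    cfc f z * z * cfc g z = cfc (fun t => f t * t * g t) z := by
  calc cfc f z * z * cfc g z
      = cfc f z * cfc id z * cfc g z := by rw [cfc_id ℝ z]
    _ = cfc (fun t => f t * t * g t) z := by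
        rw [cfc_mul (fun t => f t * t) g z (hf.mul continuous_id).continuousOn hg.continuousOn,
          cfc_mul f (fun t : ℝ => t) z hf.continuousOn continuous_id.continuousOn,
          cfc_id' ℝ z, cfc_id ℝ z]

lemma cfc_star_mul_cfc (a : B) {f g : ℝ → ℝ} (hf : Continuous f) (hg : Continuous g) :
    star (a * cfc f (star a * a)) * (a * cfc g (star a * a))
      = cfc (fun t => f t * t * g t) (star a * a) := by
  rw [star_mul, star_cfc]
  calc cfc f (star a * a) * star a * (a * cfc g (star a * a))
      = cfc f (star a * a) * (star a * a) * cfc g (star a * a) := by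
        simp only [mul_assoc]
    _ = cfc (fun t => f t * t * g t) (star a * a) :=
        cfc_mid_mul (isSelfAdjoint_star_mul_self a) hf hg

lemma mul_cfc_mul_star (a : B) {f g : ℝ → ℝ} (hf : Continuous f) (hg : Continuous g) :
    (a * cfc f (star a * a)) * star (a * cfc g (star a * a))
      = a * cfc (fun t => f t * g t) (star a * a) * star a := by
  rw [star_mul, star_cfc, ← mul_assoc, mul_assoc a,
    ← cfc_mul f g _ hf.continuousOn hg.continuousOn]

noncomputable def ramp (c s : ℝ) (t : ℝ) : ℝ := min 1 (max 0 ((t - c) * s))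

lemma continuous_ramp (c s : ℝ) : Continuous (ramp c s) :=
  continuous_const.min (continuous_const.max ((continuous_id.sub continuous_const).mul
    continuous_const))

lemma ramp_eq_zero {c s t : ℝ} (h : t ≤ c) (hs : 0 ≤ s) : ramp c s t = 0 := by
  rw [ramp, max_eq_left (by nlinarith), min_eq_right zero_le_one]

lemma ramp_eq_one {c s t : ℝ} (h : 1 ≤ (t - c) * s) : ramp c s t = 1 := by
  rw [ramp, max_eq_right (by linarith), min_eq_left h]

lemma ramp_nonneg (c s t : ℝ) : 0 ≤ ramp c s t :=
  le_min zero_le_one (le_max_left _ _)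

lemma ramp_le_one (c s t : ℝ) : ramp c s t ≤ 1 := min_le_left _ _

set_option maxHeartbeats 2000000 in
open Filter in
lemma backward_aux {a : B} [Nontrivial B] (ha : HasClosedRange a)
    (hzero : ∀ c : B, (∃ x : B, c = (1 - polarIso a * star (polarIso a)) * x *
      (1 - star (polarIso a) * polarIso a)) → HasClosedRange c → c = 0) :
    ContinuousWithinAt (polarIso : B → B) {c : B | HasClosedRange c} a := by
  have hzsa : IsSelfAdjoint (star a * a) := isSelfAdjoint_star_mul_self a
  have hε : (0:ℝ) < crEps a := crEps_pos a
  set ε := crEps a with hεdef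
  set χ : ℝ → ℝ := ramp (ε^2/4) (4/ε^2) with hχdef
  have hχcont : Continuous χ := continuous_ramp _ _
  have hslope : (0:ℝ) ≤ 4/ε^2 := by positivity
  have hχ0 : ∀ t : ℝ, t ≤ ε^2/4 → χ t = 0 := fun t h => ramp_eq_zero h hslope
  have hχ1 : ∀ t : ℝ, ε^2/2 ≤ t → χ t = 1 := by
    intro t h
    apply ramp_eq_one
    have hone : (ε^2/4) * (4/ε^2) = 1 := by field_simp
    have h3 : 0 ≤ (t - ε^2/2) * (4/ε^2) :=
      mul_nonneg (by linarith) (le_of_lt (div_pos (by norm_num) (pow_pos hε 2)))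
    nlinarith [hone, h3]
  set K : ℝ → ℝ := fun t => χ t * (Real.sqrt (max t (ε^2/2)))⁻¹ with hKdef
  have hsqrtpos : ∀ t : ℝ, 0 < Real.sqrt (max t (ε^2/2)) := fun t =>
    Real.sqrt_pos.mpr (lt_of_lt_of_le (by positivity) (le_max_right _ _))
  have hKcont : Continuous K := hχcont.mul (Continuous.inv₀
    (Real.continuous_sqrt.comp (continuous_id.max continuous_const)) fun t => (hsqrtpos t).ne')
  have hK0 : K 0 = 0 := by
    rw [hKdef]
    beta_reduce
    rw [hχ0 0 (by positivity), zero_mul]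
  have hKval : ∀ t ∈ spectrum ℝ (star a * a), Gf ε t = K t := by
    intro t ht
    by_cases ht0 : t = 0
    · rw [ht0, hK0, Gf_zero]
    · obtain ⟨h1, h2⟩ := Gf_on_spec hε (crEps_gap ha) ht ht0
      have htnn : 0 ≤ t := spec_nonneg a t ht
      have htge : ε^2 ≤ t := by nlinarith [Real.sq_sqrt htnn]
      have hmax : max t (ε^2/2) = t := max_eq_left (by nlinarith)
      rw [h2, hKdef]
      beta_reduce
      rw [hχ1 t (by nlinarith), hmax, one_mul]
  have huK : polarIso a = a * cfc K (star a * a) := by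
    rw [polarIso_eq ha hε (crEps_gap ha)]
    congr 1
    exact cfc_congr hKval
  rw [ContinuousWithinAt]
  rw [tendsto_iff_seq_tendsto]
  intro seq hseq
  obtain ⟨hseqa, hseqS⟩ := tendsto_nhdsWithin_iff.mp hseq
  rw [Metric.tendsto_atTop]
  intro η hη
  by_contra hnot
  push_neg at hnot
  set δ₁ := min (η/8) (min (1/64 : ℝ) ((η/8)^2/7)) with hδ₁def
  have hδ₁pos : 0 < δ₁ := lt_min (by positivity) (lt_min (by norm_num) (by positivity))
  have hδ₁a : δ₁ ≤ η/8 := min_le_left _ _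
  have hδ₁b : δ₁ ≤ 1/64 := le_trans (min_le_right _ _) (min_le_left _ _)
  have hδ₁c : δ₁ ≤ (η/8)^2/7 := le_trans (min_le_right _ _) (min_le_right _ _)
  have hz_tend : Tendsto (fun n => star (seq n) * seq n) atTop (nhds (star a * a)) :=
    (hseqa.star).mul hseqa
  have hzs_sa : ∀ n, IsSelfAdjoint (star (seq n) * seq n) :=
    fun n => isSelfAdjoint_star_mul_self _
  have hcfcK_tend : Tendsto (fun n => cfc K (star (seq n) * seq n)) atTop
      (nhds (cfc K (star a * a))) :=
    tendsto_cfc_of_tendsto hKcont hzs_sa hzsa hz_tend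
  have hu'_tend : Tendsto (fun n => seq n * cfc K (star (seq n) * seq n)) atTop
      (nhds (polarIso a)) := by
    rw [huK]
    exact hseqa.mul hcfcK_tend
  have hev1 : ∀ᶠ n in atTop, ‖star (seq n) * seq n - star a * a‖ < ε^2/8 := by
    obtain ⟨N, hN⟩ := Metric.tendsto_atTop.mp hz_tend (ε^2/8) (by positivity)
    exact eventually_atTop.mpr ⟨N, fun n hn => by
      have := hN n hn; rwa [dist_eq_norm] at this⟩
  have hev2 : ∀ᶠ n in atTop, ‖seq n * cfc K (star (seq n) * seq n) - polarIso a‖ < δ₁ := by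
    obtain ⟨N, hN⟩ := Metric.tendsto_atTop.mp hu'_tend δ₁ hδ₁pos
    exact eventually_atTop.mpr ⟨N, fun n hn => by
      have := hN n hn; rwa [dist_eq_norm] at this⟩
  have hfreq : ∃ᶠ n in atTop, η ≤ dist (polarIso (seq n)) (polarIso a) := by
    rw [frequently_atTop]
    intro N
    obtain ⟨n, hn, h⟩ := hnot N
    exact ⟨n, hn, h⟩
  obtain ⟨n, hdist, hcr_b, hz_close, hu_close⟩ :=
    (hfreq.and_eventually (hseqS.and (hev1.and hev2))).exists
  set u := polarIso a with hu
  set b := seq n with hbdef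
  have hcrb : HasClosedRange b := hcr_b
  have hεb : (0:ℝ) < crEps b := crEps_pos b
  have hzbsa : IsSelfAdjoint (star b * b) := isSelfAdjoint_star_mul_self b
  have gapz := gap_sq hε (crEps_gap ha)
  have gmid : ∀ t ∈ spectrum ℝ (star b * b), t ∉ Set.Ioo (ε^2/4) (3*ε^2/4) := by
    intro t ht hmem
    refine (notMem_spectrum_of_near hzsa (show (0:ℝ) < ε^2/8 by positivity) ?_ hz_close) ht
    intro s hs
    have hsnn : 0 ≤ s := spec_nonneg a s hs
    have hgap := gapz s hs
    rw [Set.mem_Ioo, not_and_or] at hgap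
    rcases hgap with h | h
    · push_neg at h
      have hs0 : s = 0 := le_antisymm h hsnn
      rw [hs0, sub_zero, abs_of_pos (by nlinarith [hmem.1, pow_pos hε 2] : (0:ℝ) < t)]
      nlinarith [hmem.1, pow_pos hε 2]
    · push_neg at h
      rw [abs_sub_comm, abs_of_pos (by nlinarith [hmem.2] : (0:ℝ) < s - t)]
      nlinarith [hmem.2]
  have trich : ∀ t ∈ spectrum ℝ (star b * b),
      t = 0 ∨ (0 < t ∧ t ≤ ε^2/4) ∨ 3*ε^2/4 ≤ t := by
    intro t ht
    have htnn : 0 ≤ t := spec_nonneg b t ht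
    rcases eq_or_lt_of_le htnn with h0 | hpos
    · exact Or.inl h0.symm
    · have h2 := gmid t ht
      rw [Set.mem_Ioo, not_and_or] at h2
      rcases h2 with h | h
      · exact Or.inr (Or.inl ⟨hpos, by linarith [not_lt.mp h]⟩)
      · exact Or.inr (Or.inr (by linarith [not_lt.mp h]))
  set L : ℝ → ℝ := fun t => (1 - χ t) * Gf (crEps b) t with hLdef
  have hLcont : Continuous L := (continuous_const.sub hχcont).mul (continuous_Gf hεb)
  have hL0 : L 0 = 0 := by rw [hLdef]; beta_reduce; rw [Gf_zero, mul_zero]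
  have hlowval : ∀ t ∈ spectrum ℝ (star b * b), 0 < t → t ≤ ε^2/4 →
      χ t = 0 ∧ Gf (crEps b) t = (Real.sqrt t)⁻¹ := by
    intro t ht hpos hle
    obtain ⟨h1, h2⟩ := Gf_on_spec hεb (crEps_gap hcrb) ht hpos.ne'
    exact ⟨hχ0 t hle, h2⟩
  have hhighval : ∀ t ∈ spectrum ℝ (star b * b), 3*ε^2/4 ≤ t →
      χ t = 1 ∧ Gf (crEps b) t = (Real.sqrt t)⁻¹ ∧ K t = (Real.sqrt t)⁻¹ := by
    intro t ht hge
    have hpos : 0 < t := by nlinarith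
    obtain ⟨h1, h2⟩ := Gf_on_spec hεb (crEps_gap hcrb) ht hpos.ne'
    have hc1 : χ t = 1 := hχ1 t (by nlinarith)
    refine ⟨hc1, h2, ?_⟩
    rw [hKdef]
    beta_reduce
    rw [hc1, one_mul, max_eq_left (by nlinarith)]
  have hKlow : ∀ t : ℝ, t ≤ ε^2/4 → K t = 0 := by
    intro t h
    rw [hKdef]
    beta_reduce
    rw [hχ0 t h, zero_mul]
  have hGfsplit : ∀ t ∈ spectrum ℝ (star b * b), Gf (crEps b) t = K t + L t := by
    intro t ht
    rcases trich t ht with h0 | ⟨hpos, hle⟩ | hge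
    · rw [h0, hK0, hL0, Gf_zero, add_zero]
    · obtain ⟨hc0, h2⟩ := hlowval t ht hpos hle
      rw [hKlow t hle, hLdef]
      beta_reduce
      rw [hc0]
      ring
    · obtain ⟨hc1, h2, h3⟩ := hhighval t ht hge
      rw [hLdef]
      beta_reduce
      rw [hc1, h3, h2]
      ring
  set u' := b * cfc K (star b * b) with hu'def
  set w := b * cfc L (star b * b) with hwdef
  have hsplit : polarIso b = u' + w := by
    have h1 : polarIso b = b * cfc (Gf (crEps b)) (star b * b) :=
      polarIso_eq hcrb hεb (crEps_gap hcrb)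
    rw [h1, cfc_congr hGfsplit,
      cfc_add (star b * b) K L hKcont.continuousOn hLcont.continuousOn, mul_add]
  have hP_eq : star w * w = cfc (fun t => t * L t ^ 2) (star b * b) := star_mul_cfc b hLcont
  have hρ01 : ∀ t ∈ spectrum ℝ (star b * b), t * L t ^ 2 = 0 ∨ t * L t ^ 2 = 1 := by
    intro t ht
    rcases trich t ht with h0 | ⟨hpos, hle⟩ | hge
    · left; rw [h0]; ring
    · right
      obtain ⟨hc0, h2⟩ := hlowval t ht hpos hle
      have hind := ind_eq hεb (crEps_gap hcrb) ht hpos.ne'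
      rw [hLdef]
      beta_reduce
      rw [hc0]
      calc t * ((1 - 0) * Gf (crEps b) t)^2 = t * Gf (crEps b) t ^2 := by ring
        _ = 1 := hind
    · left
      obtain ⟨hc1, _, _⟩ := hhighval t ht hge
      rw [hLdef]
      beta_reduce
      rw [hc1]
      ring
  have hw_le : ‖w‖ ≤ 1 := by
    have h1 : ‖w‖^2 ≤ 1 := by
      rw [hwdef, sq_norm_mul_cfc b hLcont]
      apply norm_cfc_le one_pos.le
      intro t ht
      rcases hρ01 t ht with h | h <;> rw [Real.norm_eq_abs, h] <;> norm_num
    nlinarith [norm_nonneg w]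
  have horthf : ∀ t ∈ spectrum ℝ (star b * b), K t * t * L t = 0 := by
    intro t ht
    rcases trich t ht with h0 | ⟨hpos, hle⟩ | hge
    · rw [h0]; ring
    · rw [hKlow t hle]; ring
    · obtain ⟨hc1, _, _⟩ := hhighval t ht hge
      rw [hLdef]
      beta_reduce
      rw [hc1]
      ring
  have hcfczero : cfc (fun _ : ℝ => (0:ℝ)) (star b * b) = 0 := by
    simpa using cfc_zero ℝ (a := star b * b) (A := B)
  have horth1 : star u' * w = 0 := by
    rw [hu'def, hwdef, cfc_star_mul_cfc b hKcont hLcont,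
      cfc_congr horthf, hcfczero]
  have horth2 : w * star u' = 0 := by
    rw [hu'def, hwdef, mul_cfc_mul_star b hLcont hKcont]
    have h2 : cfc (fun t => L t * K t) (star b * b) = cfc (fun _ : ℝ => (0:ℝ)) (star b * b) := by
      apply cfc_congr
      intro t ht
      have h3 := horthf t ht
      rcases trich t ht with h0 | ⟨hpos, hle⟩ | hge
      · beta_reduce
        rw [hLdef]
        beta_reduce
        rw [h0, Gf_zero]
        ring
      · beta_reduce
        rw [hKlow t hle]
        ring
      · obtain ⟨hc1, _, _⟩ := hhighval t ht hge
        beta_reduce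
        rw [hLdef]
        beta_reduce
        rw [hc1]
        ring
    rw [h2, hcfczero, mul_zero, zero_mul]
  have hnorm_u : ‖u‖ ≤ 1 := norm_polarIso_le_one ha
  have hdu : ‖star u - star u'‖ < δ₁ := by
    rw [← star_sub, norm_star, norm_sub_rev]
    exact hu_close
  have hqw : ‖w * (star u * u)‖ ≤ δ₁ := by
    have h1 : w * ((star u - star u') * u) = w * (star u * u) := by
      rw [sub_mul, mul_sub, ← mul_assoc w (star u') u, horth2, zero_mul, sub_zero]
    rw [← h1]
    have h2 : ‖(star u - star u') * u‖ ≤ δ₁ := by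
      calc ‖(star u - star u') * u‖ ≤ ‖star u - star u'‖ * ‖u‖ := norm_mul_le _ _
        _ ≤ δ₁ := by nlinarith [norm_nonneg (star u - star u'), norm_nonneg u, hδ₁pos]
    calc ‖w * ((star u - star u') * u)‖ ≤ ‖w‖ * ‖(star u - star u') * u‖ := norm_mul_le _ _
      _ ≤ δ₁ := by nlinarith [norm_nonneg w, norm_nonneg ((star u - star u') * u), hδ₁pos]
  have hpw : ‖(u * star u) * w‖ ≤ δ₁ := by
    have h1 : u * ((star u - star u') * w) = (u * star u) * w := by
      rw [sub_mul, mul_sub, horth1, mul_zero, sub_zero, mul_assoc]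
    rw [← h1]
    have h2 : ‖(star u - star u') * w‖ ≤ δ₁ := by
      calc ‖(star u - star u') * w‖ ≤ ‖star u - star u'‖ * ‖w‖ := norm_mul_le _ _
        _ ≤ δ₁ := by nlinarith [norm_nonneg (star u - star u'), norm_nonneg w, hδ₁pos]
    calc ‖u * ((star u - star u') * w)‖ ≤ ‖u‖ * ‖(star u - star u') * w‖ := norm_mul_le _ _
      _ ≤ δ₁ := by nlinarith [norm_nonneg u, norm_nonneg ((star u - star u') * w), hδ₁pos]
  set y := (1 - u * star u) * w * (1 - star u * u) with hydef
  have hq0sa : IsSelfAdjoint ((1:B) - star u * u) := by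
    rw [IsSelfAdjoint, star_sub, star_one, star_mul, star_star]
  have hqi : (star u * u) * (star u * u) = star u * u := q_idem ha
  have hq0idem : ((1:B) - star u * u) * (1 - star u * u) = 1 - star u * u := by
    rw [sub_mul, one_mul, mul_sub, mul_one, hqi]
    abel
  have hq0norm : ‖(1:B) - star u * u‖ ≤ 1 := norm_le_one_of_proj hq0sa hq0idem
  have hyw : ‖y - w‖ ≤ 2*δ₁ := by
    have hexp : y - w = -((u * star u) * w * (1 - star u * u)) - w * (star u * u) := by
      rw [hydef]
      noncomm_ring
    rw [hexp]
    calc ‖-((u * star u) * w * (1 - star u * u)) - w * (star u * u)‖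
        ≤ ‖-((u * star u) * w * (1 - star u * u))‖ + ‖w * (star u * u)‖ := norm_sub_le _ _
      _ ≤ ‖(u * star u) * w‖ * ‖(1:B) - star u * u‖ + δ₁ := by
          rw [norm_neg]
          have := norm_mul_le ((u * star u) * w) ((1:B) - star u * u)
          linarith
      _ ≤ 2*δ₁ := by nlinarith [norm_nonneg ((u * star u) * w), hδ₁pos]
  have hy_norm : ‖y‖ ≤ 2 := by
    have h1 : y = w + (y - w) := by abel
    calc ‖y‖ = ‖w + (y - w)‖ := by rw [← h1]
      _ ≤ ‖w‖ + ‖y - w‖ := norm_add_le _ _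
      _ ≤ 2 := by linarith [hδ₁b]
  have hYP : ‖star y * y - star w * w‖ ≤ 6*δ₁ := by
    have hexp : star y * y - star w * w = star y * (y - w) + star (y - w) * w := by
      rw [star_sub]
      noncomm_ring
    rw [hexp]
    calc ‖star y * (y - w) + star (y - w) * w‖
        ≤ ‖star y * (y - w)‖ + ‖star (y - w) * w‖ := norm_add_le _ _
      _ ≤ ‖y‖ * ‖y - w‖ + ‖y - w‖ * ‖w‖ := by
          have e1 := norm_mul_le (star y) (y - w)
          have e2 := norm_mul_le (star (y - w)) w
          rw [norm_star] at e1 e2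
          linarith
      _ ≤ 6*δ₁ := by nlinarith [norm_nonneg (y - w), norm_nonneg w, norm_nonneg y, hδ₁pos]
  have hPspec : ∀ s ∈ spectrum ℝ (star w * w), s = 0 ∨ s = 1 := by
    intro s hs
    rw [hP_eq, cfc_map_spectrum (fun t => t * L t ^ 2) (star b * b) hzbsa
      (continuous_id.mul (hLcont.pow 2)).continuousOn] at hs
    obtain ⟨t, ht, rfl⟩ := hs
    exact hρ01 t ht
  have hwsa : IsSelfAdjoint (star w * w) := isSelfAdjoint_star_mul_self w
  have hYspec : ∀ t ∈ spectrum ℝ (star y * y), |t| ≤ 7*δ₁ ∨ |t - 1| ≤ 7*δ₁ := by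
    intro t ht
    by_contra hcon
    push_neg at hcon
    refine (notMem_spectrum_of_near hwsa (show (0:ℝ) < 7*δ₁ by positivity) ?_ ?_) ht
    · intro s hs
      rcases hPspec s hs with rfl | rfl
      · rw [sub_zero]
        exact (hcon.1).le
      · exact (hcon.2).le
    · have h6 : ‖star y * y - star w * w‖ ≤ 6*δ₁ := hYP
      linarith
  have hYsa : IsSelfAdjoint (star y * y) := isSelfAdjoint_star_mul_self y
  have hYnn : ∀ t ∈ spectrum ℝ (star y * y), 0 ≤ t := spec_nonneg y
  set χ' : ℝ → ℝ := ramp (1/4) 4 with hχ'def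
  have hχ'cont : Continuous χ' := continuous_ramp _ _
  have hχ'0 : ∀ t : ℝ, t ≤ 1/4 → χ' t = 0 := fun t h => ramp_eq_zero h (by norm_num)
  have hχ'1 : ∀ t : ℝ, 1/2 ≤ t → χ' t = 1 := fun t h => ramp_eq_one (by linarith)
  have hχ'nn : ∀ t : ℝ, 0 ≤ χ' t := ramp_nonneg _ _
  have hχ'le : ∀ t : ℝ, χ' t ≤ 1 := ramp_le_one _ _
  set m := cfc χ' (star y * y) with hm
  set e := y * m with he
  have hyq0 : y * (1 - star u * u) = y := by
    rw [hydef, mul_assoc, mul_assoc, hq0idem, ← mul_assoc]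
  have hyq : y * (star u * u) = 0 := by
    have h1 := hyq0
    rw [mul_sub, mul_one] at h1
    exact sub_eq_self.mp h1
  have hYq : (star y * y) * (star u * u) = 0 := by
    rw [mul_assoc, hyq, mul_zero]
  have hmq : m * (star u * u) = 0 := by
    rw [hm]
    exact cfc_mul_eq_zero_of_mul_eq_zero hYsa hYnn hYq hχ'cont (hχ'0 0 (by norm_num))
  have hmq₀ : m * (1 - star u * u) = m := by rw [mul_sub, mul_one, hmq, sub_zero]
  have hmem_e : ∃ x : B, e = (1 - u * star u) * x * (1 - star u * u) := by
    refine ⟨w * ((1 - star u * u) * m), ?_⟩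
    rw [he]
    conv_lhs => rw [← hmq₀]
    rw [hydef]
    simp only [mul_assoc]
  have hsee : star e * e = cfc (fun t => χ' t * t * χ' t) (star y * y) := by
    rw [he, hm]
    exact cfc_star_mul_cfc y hχ'cont hχ'cont
  have hegap : ∀ s ∈ spectrum ℝ (star e * e), s ∉ Set.Ioo 0 (1/2) := by
    intro s hs hmem
    rw [hsee, cfc_map_spectrum (fun t => χ' t * t * χ' t) (star y * y) hYsa
      ((hχ'cont.mul continuous_id).mul hχ'cont).continuousOn] at hs
    obtain ⟨t, ht, rfl⟩ := hs
    beta_reduce at hmem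
    have htnn := hYnn t ht
    rcases hYspec t ht with hlow | hhigh
    · have hle : t ≤ 1/4 := by
        rw [abs_of_nonneg htnn] at hlow
        linarith
      rw [hχ'0 t hle] at hmem
      rw [Set.mem_Ioo] at hmem
      have h0 : (0:ℝ) * t * 0 = 0 := by ring
      rw [h0] at hmem
      exact lt_irrefl 0 hmem.1
    · have hge : 1/2 ≤ t := by
        have h1 := (abs_le.mp hhigh).1
        linarith
      rw [hχ'1 t hge] at hmem
      rw [Set.mem_Ioo] at hmem
      have h1 : (1:ℝ) * t * 1 = t := by ring
      rw [h1] at hmem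
      linarith [hmem.2]
  have hecr : HasClosedRange e := hasClosedRange_of_gap_sq (by norm_num) hegap
  have hey : ‖e - y‖ ≤ Real.sqrt (7*δ₁) := by
    have h1 : e - y = y * cfc (fun t => χ' t - 1) (star y * y) := by
      have h2 : cfc (fun t => χ' t - (1:ℝ)) (star y * y) = m - 1 := by
        rw [cfc_sub χ' (fun _ : ℝ => (1:ℝ)) (star y * y) hχ'cont.continuousOn
          continuous_const.continuousOn,
          show (fun _ : ℝ => (1:ℝ)) = (1 : ℝ → ℝ) from rfl, cfc_one ℝ (star y * y), hm]
      rw [h2, mul_sub, mul_one, he]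
    have h3 : ‖e - y‖^2 ≤ 7*δ₁ := by
      rw [h1, sq_norm_mul_cfc y (f := fun t => χ' t - 1) (hχ'cont.sub continuous_const)]
      apply norm_cfc_le (by positivity)
      intro t ht
      have htnn := hYnn t ht
      rcases hYspec t ht with hlow | hhigh
      · rw [abs_of_nonneg htnn] at hlow
        rw [Real.norm_eq_abs]
        have h4 : (χ' t - 1)^2 ≤ 1 := by nlinarith [hχ'nn t, hχ'le t]
        rw [abs_of_nonneg (by positivity : (0:ℝ) ≤ t * (χ' t - 1)^2)]
        nlinarith
      · have hge : 1/2 ≤ t := by linarith [(abs_le.mp hhigh).1]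
        rw [hχ'1 t hge]
        have h0 : t * ((1:ℝ) - 1)^2 = 0 := by ring
        rw [h0, norm_zero]
        positivity
    nlinarith [Real.sqrt_nonneg (7*δ₁), norm_nonneg (e - y),
      Real.sq_sqrt (show (0:ℝ) ≤ 7*δ₁ by positivity)]
  have hsqrt7 : Real.sqrt (7*δ₁) ≤ η/8 := by
    have h1 : 7*δ₁ ≤ (η/8)^2 := by linarith [hδ₁c]
    calc Real.sqrt (7*δ₁) ≤ Real.sqrt ((η/8)^2) := Real.sqrt_le_sqrt h1
      _ = η/8 := Real.sqrt_sq (by positivity)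
  have hwlarge : η - δ₁ ≤ ‖w‖ := by
    have h1 : polarIso b - u = (u' - u) + w := by rw [hsplit]; abel
    have h2 : η ≤ ‖polarIso b - u‖ := by
      rw [← dist_eq_norm]
      exact hdist
    have h3 := norm_add_le (u' - u) w
    rw [← h1] at h3
    linarith [hu_close]
  have hepos : (0:ℝ) < ‖e‖ := by
    have h0 : w = e - (e - y) - (y - w) := by abel
    have h1 : ‖w‖ ≤ ‖e‖ + ‖e - y‖ + ‖y - w‖ := by
      calc ‖w‖ = ‖e - (e - y) - (y - w)‖ := by rw [← h0]
        _ ≤ ‖e - (e - y)‖ + ‖y - w‖ := norm_sub_le _ _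
        _ ≤ ‖e‖ + ‖e - y‖ + ‖y - w‖ := by linarith [norm_sub_le e (e - y)]
    linarith [hey, hsqrt7, hyw, hwlarge, hδ₁a]
  have hzero_e := hzero e hmem_e hecr
  rw [hzero_e, norm_zero] at hepos
  exact lt_irrefl 0 hepos

end PolarAux

/-- **Theorem 8.** Let `a` be a closed range element of a unital C*-algebra `A`,
with left and right defect projections `p₀ = 1 − 𝐮(a)𝐮(a)*` and
`q₀ = 1 − 𝐮(a)*𝐮(a)`.  Then `a` is a continuity point of `𝐮` (as a map on the
set of closed range elements of `A`) if and only if `0` is the only closed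
range element of `p₀ A q₀`. -/
theorem continuousWithinAt_polarIso_iff
    {A : Type*} [CStarAlgebra A] (a : A) (ha : HasClosedRange a)
    (p₀ q₀ : A)
    (hp₀ : p₀ = 1 - polarIso a * star (polarIso a))
    (hq₀ : q₀ = 1 - star (polarIso a) * polarIso a) :
    ContinuousWithinAt (polarIso : A → A) {b : A | HasClosedRange b} a ↔
      ∀ b : A, (∃ x : A, b = p₀ * x * q₀) → HasClosedRange b → b = 0 := by
  subst hp₀ hq₀
  rcases subsingleton_or_nontrivial A with hsub | hnt
  · constructor
    · intro _ b _ _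
      exact Subsingleton.elim b 0
    · intro _
      have hconst : (polarIso : A → A) = fun _ => polarIso a :=
        funext fun x => Subsingleton.elim _ _
      rw [hconst]
      exact continuousWithinAt_const
  · constructor
    · intro hcont b hform hbcr
      by_contra hbne
      obtain ⟨x, hx⟩ := hform
      rw [hx] at hbcr hbne
      exact PolarAux.forward_aux ha hbcr hbne hcont
    · intro hz
      exact PolarAux.backward_aux ha hz
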